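/- Under the stated two-lane assumptions and for a time step Δt with 0 < Δt ≤ τ/(2𝒮), define the two-lane relaxation step T₁(ρ₁,ρ₂) = ρ₁ − (Δt/τ)·S(ρ₁,ρ₂) and T₂(ρ₁,ρ₂) = ρ₂ + (Δt/τ)·S(ρ₁,ρ₂). Then for every (ρ₁,ρ₂) ∈ [0,R₁]×[0,R₂] the updated state satisfies |S(T₁(ρ₁,ρ₂), T₂(ρ₁,ρ₂))| ≤ (1 − 2cΔt/τ)·|S(ρ₁,ρ₂)|. (Geometric contraction of the lane-exchange source in one splitting step, which is the key estimate in the proof of Lemma 4.1.) -/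

import Mathlib

set_option maxHeartbeats 1600000


open Set

/-- Mean value bounds for a differentiable real function with derivative
bounded on an interval. -/
lemma mvt_bounds_aux (f : ℝ → ℝ) (hf : Differentiable ℝ f) (a b lo hi : ℝ) (hab : a ≤ b)
    (hd : ∀ x ∈ Icc a b, deriv f x ∈ Icc lo hi) :
    lo * (b - a) ≤ f b - f a ∧ f b - f a ≤ hi * (b - a) := by
  rcases eq_or_lt_of_le hab with rfl | h
  · simp
  · obtain ⟨ξ, hξ, hslope⟩ := exists_deriv_eq_slope f h hf.continuous.continuousOn
      hf.differentiableOn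
    have hξ' := hd ξ (Ioo_subset_Icc_self hξ)
    have hba : (0:ℝ) < b - a := by linarith
    rw [eq_div_iff hba.ne'] at hslope
    constructor
    · nlinarith [hξ'.1]
    · nlinarith [hξ'.2]

/-- Geometric contraction of the lane-exchange source in one splitting step
(key estimate in the proof of Lemma 4.1). -/
theorem two_lane_source_contraction_step
    (R₁ R₂ c 𝒮 τ Δt : ℝ)
    (hR₁ : 0 < R₁) (hR₂ : 0 < R₂) (hc : 0 < c) (hc𝒮 : c ≤ 𝒮) (hτ : 0 < τ)
    (hΔt : 0 < Δt) (hΔtτ : Δt ≤ τ / (2 * 𝒮))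
    (S : ℝ → ℝ → ℝ)
    (hSC1 : ContDiff ℝ 1 (Function.uncurry S))
    (hS1 : ∀ u ∈ Icc (0:ℝ) R₁, ∀ w ∈ Icc (0:ℝ) R₂,
      deriv (fun u' => S u' w) u ∈ Icc c 𝒮)
    (hS2 : ∀ u ∈ Icc (0:ℝ) R₁, ∀ w ∈ Icc (0:ℝ) R₂,
      deriv (fun w' => S u w') w ∈ Icc (-𝒮) (-c))
    (hS00 : S 0 0 = 0) (hSRR : S R₁ R₂ = 0)
    (T₁ T₂ : ℝ → ℝ → ℝ)
    (hT₁ : ∀ ρ₁ ρ₂, T₁ ρ₁ ρ₂ = ρ₁ - (Δt / τ) * S ρ₁ ρ₂)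
    (hT₂ : ∀ ρ₁ ρ₂, T₂ ρ₁ ρ₂ = ρ₂ + (Δt / τ) * S ρ₁ ρ₂)
    (ρ₁ ρ₂ : ℝ) (h₁ : ρ₁ ∈ Icc (0:ℝ) R₁) (h₂ : ρ₂ ∈ Icc (0:ℝ) R₂) :
    |S (T₁ ρ₁ ρ₂) (T₂ ρ₁ ρ₂)| ≤ (1 - 2 * c * Δt / τ) * |S ρ₁ ρ₂| := by
  have h𝒮 : 0 < 𝒮 := lt_of_lt_of_le hc hc𝒮
  set f := Function.uncurry S with hf_def
  have hf : Differentiable ℝ f := hSC1.differentiable one_ne_zero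
  -- partial derivatives via fderiv
  have hpd1 : ∀ u w : ℝ, HasDerivAt (fun u' => S u' w) (fderiv ℝ f (u, w) (1, 0)) u := by
    intro u w
    have hp : HasDerivAt (fun u' : ℝ => (u', w)) ((1:ℝ), (0:ℝ)) u :=
      (hasDerivAt_id u).prodMk (hasDerivAt_const u w)
    exact (hf (u, w)).hasFDerivAt.comp_hasDerivAt u hp
  have hpd2 : ∀ u w : ℝ, HasDerivAt (fun w' => S u w') (fderiv ℝ f (u, w) (0, 1)) w := by
    intro u w
    have hp : HasDerivAt (fun w' : ℝ => (u, w')) ((0:ℝ), (1:ℝ)) w :=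
      (hasDerivAt_const w u).prodMk (hasDerivAt_id w)
    exact (hf (u, w)).hasFDerivAt.comp_hasDerivAt w hp
  have hd1 : ∀ u ∈ Icc (0:ℝ) R₁, ∀ w ∈ Icc (0:ℝ) R₂,
      fderiv ℝ f (u, w) (1, 0) ∈ Icc c 𝒮 := by
    intro u hu w hw
    have h := hS1 u hu w hw
    rwa [(hpd1 u w).deriv] at h
  have hd2 : ∀ u ∈ Icc (0:ℝ) R₁, ∀ w ∈ Icc (0:ℝ) R₂,
      fderiv ℝ f (u, w) (0, 1) ∈ Icc (-𝒮) (-c) := by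
    intro u hu w hw
    have h := hS2 u hu w hw
    rwa [(hpd2 u w).deriv] at h
  -- monotonicity bounds in each variable
  have hSmono1 : ∀ w ∈ Icc (0:ℝ) R₂, ∀ a ∈ Icc (0:ℝ) R₁, ∀ b ∈ Icc (0:ℝ) R₁, a ≤ b →
      c * (b - a) ≤ S b w - S a w ∧ S b w - S a w ≤ 𝒮 * (b - a) := by
    intro w hw a ha b hb hab
    refine mvt_bounds_aux (fun u => S u w) (fun x => (hpd1 x w).differentiableAt) a b c 𝒮 hab ?_
    intro x hx
    exact hS1 x ⟨le_trans ha.1 hx.1, le_trans hx.2 hb.2⟩ w hw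
  have hSmono2 : ∀ u ∈ Icc (0:ℝ) R₁, ∀ a ∈ Icc (0:ℝ) R₂, ∀ b ∈ Icc (0:ℝ) R₂, a ≤ b →
      (-𝒮) * (b - a) ≤ S u b - S u a ∧ S u b - S u a ≤ (-c) * (b - a) := by
    intro u hu a ha b hb hab
    refine mvt_bounds_aux (fun w => S u w) (fun x => (hpd2 u x).differentiableAt) a b (-𝒮) (-c) hab ?_
    intro x hx
    exact hS2 u hu x ⟨le_trans ha.1 hx.1, le_trans hx.2 hb.2⟩
  have h0R₁ : (0:ℝ) ∈ Icc (0:ℝ) R₁ := ⟨le_rfl, hR₁.le⟩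
  have h0R₂ : (0:ℝ) ∈ Icc (0:ℝ) R₂ := ⟨le_rfl, hR₂.le⟩
  have hR₁m : R₁ ∈ Icc (0:ℝ) R₁ := ⟨hR₁.le, le_rfl⟩
  have hR₂m : R₂ ∈ Icc (0:ℝ) R₂ := ⟨hR₂.le, le_rfl⟩
  set s := S ρ₁ ρ₂ with hs_def
  -- four bounds on s
  have hb1 : s ≤ 𝒮 * ρ₁ := by
    have h1 := (hSmono1 ρ₂ h₂ 0 h0R₁ ρ₁ h₁ h₁.1).2
    have h2 := (hSmono2 0 h0R₁ 0 h0R₂ ρ₂ h₂ h₂.1).2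
    nlinarith [h₂.1]
  have hb2 : s ≤ 𝒮 * (R₂ - ρ₂) := by
    have h1 := (hSmono2 ρ₁ h₁ ρ₂ h₂ R₂ hR₂m h₂.2).1
    have h2 := (hSmono1 R₂ hR₂m ρ₁ h₁ R₁ hR₁m h₁.2).1
    nlinarith [h₁.2]
  have hb3 : -(𝒮 * (R₁ - ρ₁)) ≤ s := by
    have h1 := (hSmono1 ρ₂ h₂ ρ₁ h₁ R₁ hR₁m h₁.2).2
    have h2 := (hSmono2 R₁ hR₁m ρ₂ h₂ R₂ hR₂m h₂.2).2
    nlinarith [h₂.2]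
  have hb4 : -(𝒮 * ρ₂) ≤ s := by
    have h1 := (hSmono2 ρ₁ h₁ 0 h0R₂ ρ₂ h₂ h₂.1).1
    have h2 := (hSmono1 0 h0R₂ 0 h0R₁ ρ₁ h₁ h₁.1).1
    nlinarith [h₁.1]
  set lam := Δt / τ with hlam_def
  have hlam : 0 < lam := div_pos hΔt hτ
  have hlam𝒮 : lam * 𝒮 ≤ 1 / 2 := by
    rw [hlam_def, div_mul_eq_mul_div, div_le_div_iff₀ hτ (by norm_num : (0:ℝ) < 2)]
    have := (le_div_iff₀ (by positivity : (0:ℝ) < 2 * 𝒮)).mp hΔtτ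
    nlinarith
  set L := lam * s with hL_def
  -- bounds on L ensuring the segment stays in the rectangle
  have hL1 : L ≤ ρ₁ := by nlinarith [mul_le_mul_of_nonneg_left hb1 hlam.le, h₁.1]
  have hL2 : L ≤ R₂ - ρ₂ := by nlinarith [mul_le_mul_of_nonneg_left hb2 hlam.le, h₂.2]
  have hL3 : -(R₁ - ρ₁) ≤ L := by nlinarith [mul_le_mul_of_nonneg_left hb3 hlam.le, h₁.2]
  have hL4 : -ρ₂ ≤ L := by nlinarith [mul_le_mul_of_nonneg_left hb4 hlam.le, h₂.1]
  -- segment stays in rectangle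
  have hseg : ∀ t ∈ Icc (0:ℝ) 1,
      (ρ₁ - t * L) ∈ Icc (0:ℝ) R₁ ∧ (ρ₂ + t * L) ∈ Icc (0:ℝ) R₂ := by
    intro t ht
    rcases le_total L 0 with hL | hL
    · have k1 : t * L ≤ 0 := by nlinarith [mul_nonneg ht.1 (neg_nonneg.2 hL)]
      have k2 : L ≤ t * L := by nlinarith [mul_le_mul_of_nonneg_right ht.2 (neg_nonneg.2 hL)]
      exact ⟨⟨by linarith [h₁.1], by linarith [h₁.2]⟩, ⟨by linarith [h₂.1], by linarith [h₂.2]⟩⟩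
    · have k1 : 0 ≤ t * L := mul_nonneg ht.1 hL
      have k2 : t * L ≤ L := by nlinarith [mul_le_mul_of_nonneg_right ht.2 hL]
      exact ⟨⟨by linarith [h₁.1], by linarith [h₁.2]⟩, ⟨by linarith [h₂.1], by linarith [h₂.2]⟩⟩
  -- the path and its derivative
  set φ : ℝ → ℝ := fun t => S (ρ₁ - t * L) (ρ₂ + t * L) with hφ_def
  have hφd : ∀ t : ℝ, HasDerivAt φ
      (-L * fderiv ℝ f (ρ₁ - t * L, ρ₂ + t * L) (1, 0)
        + L * fderiv ℝ f (ρ₁ - t * L, ρ₂ + t * L) (0, 1)) t := by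
    intro t
    have ha : HasDerivAt (fun t' : ℝ => ρ₁ - t' * L) (-L) t := by
      simpa using ((hasDerivAt_id' t).mul_const L).const_sub ρ₁
    have hb : HasDerivAt (fun t' : ℝ => ρ₂ + t' * L) L t := by
      simpa using (hasDerivAt_id' t).mul_const L
    have hp : HasDerivAt (fun t' : ℝ => (ρ₁ - t' * L, ρ₂ + t' * L)) ((-L : ℝ), L) t :=
      ha.prodMk hb
    have hcomp := (hf (ρ₁ - t * L, ρ₂ + t * L)).hasFDerivAt.comp_hasDerivAt t hp
    have hvec : ((-L : ℝ), L) = (-L) • ((1:ℝ), (0:ℝ)) + L • ((0:ℝ), (1:ℝ)) := by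
      simp [Prod.ext_iff]
    rw [hvec, map_add, map_smul, map_smul, smul_eq_mul, smul_eq_mul] at hcomp
    exact hcomp
  -- mean value theorem along the path
  obtain ⟨θ, hθ, hslope⟩ := exists_deriv_eq_slope φ one_pos
    (fun t _ => (hφd t).continuousAt.continuousWithinAt)
    (fun t _ => (hφd t).differentiableAt.differentiableWithinAt)
  have hθ' : θ ∈ Icc (0:ℝ) 1 := Ioo_subset_Icc_self hθ
  obtain ⟨hθ₁, hθ₂⟩ := hseg θ hθ'
  set A := fderiv ℝ f (ρ₁ - θ * L, ρ₂ + θ * L) (1, 0) with hA_def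
  set B := fderiv ℝ f (ρ₁ - θ * L, ρ₂ + θ * L) (0, 1) with hB_def
  have hA : A ∈ Icc c 𝒮 := hd1 _ hθ₁ _ hθ₂
  have hB : B ∈ Icc (-𝒮) (-c) := hd2 _ hθ₁ _ hθ₂
  have hderiv : deriv φ θ = -L * A + L * B := (hφd θ).deriv
  have hφ0 : φ 0 = s := by simp [hφ_def, hs_def]
  have hφ1 : φ 1 = S (T₁ ρ₁ ρ₂) (T₂ ρ₁ ρ₂) := by
    rw [hφ_def, hT₁, hT₂]
    norm_num [hL_def, hlam_def, hs_def]
  have hkey : S (T₁ ρ₁ ρ₂) (T₂ ρ₁ ρ₂) = s * (1 - lam * A + lam * B) := by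
    norm_num at hslope
    rw [hderiv, hφ0, hφ1] at hslope
    rw [hL_def] at hslope
    linear_combination -hslope
  have hK0 : 0 ≤ 1 - lam * A + lam * B := by
    nlinarith [hA.2, hB.1, mul_le_mul_of_nonneg_left (by linarith [hA.2, hB.1] : A - B ≤ 2 * 𝒮) hlam.le]
  have hK1 : 1 - lam * A + lam * B ≤ 1 - 2 * c * lam := by
    nlinarith [hA.1, hB.2, mul_le_mul_of_nonneg_left (by linarith [hA.1, hB.2] : 2 * c ≤ A - B) hlam.le]
  have hrhs : (1 : ℝ) - 2 * c * Δt / τ = 1 - 2 * c * lam := by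
    rw [hlam_def]; ring
  rw [hkey, hrhs, abs_mul, abs_of_nonneg hK0, mul_comm (1 - 2 * c * lam) _]
  exact mul_le_mul_of_nonneg_left hK1 (abs_nonneg s)
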